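/- Let Z_1,...,Z_{n+1} be exchangeable real-valued random variables, and let t be the ⌈(1-α)(n+1)⌉-th smallest value among Z_1,...,Z_n (with t = +∞ if ⌈(1-α)(n+1)⌉ > n). Then P(Z_{n+1} ≤ t) ≥ 1-α. -/

import Mathlib

open MeasureTheory
open scoped ENNReal NNReal

/-- The `k`-th smallest element of a list of reals (1-indexed). -/
noncomputable def orderStat (k : ℕ) (l : List ℝ) : ℝ :=
  (l.insertionSort (· ≤ ·)).getD (k - 1) 0

section Aux
open Finset


lemma sorted_le_getElem_iff (s : List ℝ) (hs : s.Pairwise (· ≤ ·)) (k : ℕ) (hk1 : 1 ≤ k)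
    (hk : k ≤ s.length) (x : ℝ) :
    x ≤ s[k-1]'(by omega) ↔ s.countP (fun y => decide (y < x)) < k := by
  have hmono : ∀ a b : ℕ, (ha : a < s.length) → (hb : b < s.length) → a ≤ b →
      s[a] ≤ s[b] := by
    intro a b ha hb hab
    exact hs.rel_get_of_le (a := ⟨a, ha⟩) (b := ⟨b, hb⟩) hab
  have hsplit : ∀ m : ℕ, s.countP (fun y => decide (y < x)) =
        (s.take m).countP (fun y => decide (y < x)) +
        (s.drop m).countP (fun y => decide (y < x)) := by
      intro m
      conv_lhs => rw [← List.take_append_drop m s]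
      exact List.countP_append ..
  constructor
  · intro h
    have hdrop : (s.drop (k-1)).countP (fun y => decide (y < x)) = 0 := by
      rw [List.countP_eq_zero]
      intro y hy
      simp only [decide_eq_true_eq, not_lt]
      obtain ⟨i, hi, rfl⟩ := List.getElem_of_mem hy
      have hi' : k - 1 + i < s.length := by
        simp only [List.length_drop] at hi; omega
      rw [List.getElem_drop]
      exact le_trans h (hmono _ _ (by omega) hi' (by omega))
    have htake : (s.take (k-1)).countP (fun y => decide (y < x)) ≤ k - 1 :=
      le_trans List.countP_le_length (by simp)
    have := hsplit (k-1)
    omega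
  · intro h
    by_contra hx
    push_neg at hx
    have htake : (s.take k).countP (fun y => decide (y < x)) = (s.take k).length := by
      rw [List.countP_eq_length]
      intro y hy
      simp only [decide_eq_true_eq]
      obtain ⟨i, hi, rfl⟩ := List.getElem_of_mem hy
      have hi' : i < s.length := by
        simp only [List.length_take] at hi; omega
      have hik : i ≤ k - 1 := by
        simp only [List.length_take] at hi; omega
      rw [List.getElem_take]
      exact lt_of_le_of_lt (hmono _ _ hi' (by omega) hik) hx
    have hlen : (s.take k).length = k := by simp [hk]
    have := hsplit k
    omega

lemma le_orderStat_iff (l : List ℝ) (k : ℕ) (hk1 : 1 ≤ k) (hk : k ≤ l.length) (x : ℝ) :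
    x ≤ orderStat k l ↔ l.countP (fun y => decide (y < x)) < k := by
  set s := l.insertionSort (· ≤ ·) with hs
  have hperm : List.Perm s l := l.perm_insertionSort (· ≤ ·)
  have hlen : s.length = l.length := hperm.length_eq
  have hsort : s.Pairwise (· ≤ ·) := l.pairwise_insertionSort (· ≤ ·)
  rw [orderStat, ← hs, List.getD_eq_getElem _ _ (by omega),
    ← hperm.countP_eq]
  exact sorted_le_getElem_iff s hsort k hk1 (by omega) x

lemma countP_ofFn (n : ℕ) (g : Fin n → ℝ) (x : ℝ) :
    (List.ofFn g).countP (fun y => decide (y < x)) =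
      (Finset.univ.filter fun i => g i < x).card := by
  induction n with
  | zero => simp
  | succ m ih =>
    rw [List.ofFn_succ, List.countP_cons, ih (fun i => g i.succ),
      Fin.card_filter_univ_succ (fun i => g i < x)]
    by_cases h : g 0 < x <;> simp [h, add_comm]

lemma card_filter_comp_perm {m : ℕ} (σ : Equiv.Perm (Fin m)) (p : Fin m → Prop)
    [DecidablePred p] :
    (Finset.univ.filter fun i => p (σ i)).card = (Finset.univ.filter p).card := by
  apply Finset.card_bij (fun i _ => σ i)
  · intro a ha; simp only [mem_filter, mem_univ, true_and] at ha ⊢; exact ha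
  · intro a _ b _ h; exact σ.injective h
  · intro b hb
    refine ⟨σ.symm b, ?_, by simp⟩
    simp only [mem_filter, mem_univ, true_and] at hb ⊢
    simpa using hb

lemma card_rank_lt {m : ℕ} (v : Fin m → ℝ) (k : ℕ) (hk : k ≤ m) :
    k ≤ (Finset.univ.filter fun j =>
      (Finset.univ.filter fun i => v i < v j).card < k).card := by
  set e := Tuple.sort v with he
  have hmono := Tuple.monotone_sort v
  have hsub : (Finset.univ.filter fun r : Fin m => (r : ℕ) < k).image e ⊆
      (Finset.univ.filter fun j => (Finset.univ.filter fun i => v i < v j).card < k) := by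
    intro j hj
    simp only [mem_image, mem_filter, mem_univ, true_and] at hj ⊢
    obtain ⟨r, hr, rfl⟩ := hj
    have hcard : (Finset.univ.filter fun i => v i < v (e r)).card =
        (Finset.univ.filter fun s => v (e s) < v (e r)).card :=
      (card_filter_comp_perm e (fun i => v i < v (e r))).symm
    rw [hcard]
    calc (Finset.univ.filter fun s => v (e s) < v (e r)).card
        ≤ (Finset.univ.filter fun s : Fin m => s < r).card := by
          apply Finset.card_le_card
          intro s hs
          simp only [mem_filter, mem_univ, true_and] at hs ⊢
          by_contra hsr
          exact absurd (hmono (not_lt.mp hsr)) (not_le.mpr hs)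
      _ = (r : ℕ) := by
          rw [show (Finset.univ.filter fun s : Fin m => s < r) = Finset.Iio r by
            ext s; simp]
          exact Fin.card_Iio r
      _ < k := hr
  calc k = (Finset.univ.filter fun r : Fin m => (r : ℕ) < k).card := by
        rw [show (Finset.univ.filter fun r : Fin m => (r : ℕ) < k) =
            (Finset.univ : Finset (Fin k)).map (Fin.castLEEmb hk) by
          ext r
          simp only [mem_filter, mem_univ, true_and, Finset.mem_map, Fin.castLEEmb]
          constructor
          · intro hr
            exact ⟨⟨r, hr⟩, by simp [Fin.castLE, Fin.ext_iff]⟩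
          · rintro ⟨j, -, rfl⟩
            simp [Fin.castLE]]
        simp
    _ = ((Finset.univ.filter fun r : Fin m => (r : ℕ) < k).image e).card :=
        (Finset.card_image_of_injective _ e.injective).symm
    _ ≤ _ := Finset.card_le_card hsub

end Aux

section Main
open Finset

/-- Split-conformal marginal coverage (lower bound): if `Z 0, ..., Z n` are exchangeable,
and `t` is the `⌈(1-α)(n+1)⌉`-th smallest among the first `n` (`t = +∞`, i.e. the event is
trivially true, if `⌈(1-α)(n+1)⌉ > n`), then `P(Z (n+1) ≤ t) ≥ 1 - α`. -/
theorem stmt0 {Ω : Type*} [MeasurableSpace Ω] (P : Measure Ω) [IsProbabilityMeasure P]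
    (n : ℕ) (Z : Fin (n + 1) → Ω → ℝ) (hZ : ∀ i, Measurable (Z i))
    (hexch : ∀ σ : Equiv.Perm (Fin (n + 1)),
      Measure.map (fun ω i => Z (σ i) ω) P = Measure.map (fun ω i => Z i ω) P)
    (α : ℝ) (hα : α ∈ Set.Ioo (0 : ℝ) 1) :
    ENNReal.ofReal (1 - α) ≤
      P {ω | if ⌈(1 - α) * (n + 1)⌉₊ ≤ n then
          Z (Fin.last n) ω ≤
            orderStat ⌈(1 - α) * (n + 1)⌉₊ (List.ofFn fun i : Fin n => Z i.castSucc ω)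
        else True} := by
  classical
  obtain ⟨hα0, hα1⟩ := hα
  set k := ⌈(1 - α) * (n + 1)⌉₊ with hkdef
  by_cases hkn : k ≤ n
  swap
  · simp only [hkn, if_false]
    simp only [Set.setOf_true, measure_univ]
    exact ENNReal.ofReal_le_one.mpr (by linarith)
  -- main case
  have hpos : (0:ℝ) < (1 - α) * (n + 1) := by
    have : (0:ℝ) < (n:ℝ) + 1 := by positivity
    nlinarith
  have hk1 : 1 ≤ k := Nat.one_le_iff_ne_zero.mpr (by
    simp only [hkdef, ne_eq, Nat.ceil_eq_zero, not_le]; linarith)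
  simp only [hkn, if_true]
  set N : (Fin (n+1) → ℝ) → Fin (n+1) → ℕ :=
    fun v j => (Finset.univ.filter fun i => v i < v j).card with hN
  set B : Fin (n+1) → Set (Fin (n+1) → ℝ) := fun j => {v | N v j < k} with hB
  set Zv : Ω → Fin (n+1) → ℝ := fun ω i => Z i ω with hZv
  set A : Fin (n+1) → Set Ω := fun j => Zv ⁻¹' B j with hA
  have hZvm : Measurable Zv := measurable_pi_lambda _ hZ
  have hNm : ∀ j, Measurable fun v => N v j := by
    intro j
    have : (fun v => N v j) = fun v => ∑ i, if v i < v j then 1 else 0 := by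
      funext v; rw [hN]; exact Finset.card_filter _ _
    rw [this]
    exact Finset.measurable_sum _ fun i _ =>
      Measurable.ite (measurableSet_lt (measurable_pi_apply i) (measurable_pi_apply j))
        measurable_const measurable_const
  have hBm : ∀ j, MeasurableSet (B j) := fun j =>
    (hNm j) (MeasurableSet.of_discrete (s := {m : ℕ | m < k}))
  have hAm : ∀ j, MeasurableSet (A j) := fun j => hZvm (hBm j)
  have hPA : ∀ j, P (A j) = P (A (Fin.last n)) := by
    intro j
    set σ := Equiv.swap j (Fin.last n) with hσ
    have hm2 : Measurable (fun ω i => Z (σ i) ω) :=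
      measurable_pi_lambda _ fun i => hZ (σ i)
    have hpre : (fun ω i => Z (σ i) ω) ⁻¹' B (Fin.last n) = A j := by
      ext ω
      simp only [Set.mem_preimage, hA, hB, Set.mem_setOf_eq, hN, hZv]
      simp only [hσ, Equiv.swap_apply_right]
      rw [card_filter_comp_perm σ (fun i => Z i ω < Z j ω)]
    calc P (A j) = P ((fun ω i => Z (σ i) ω) ⁻¹' B (Fin.last n)) := by rw [hpre]
      _ = (P.map (fun ω i => Z (σ i) ω)) (B (Fin.last n)) :=
          (Measure.map_apply hm2 (hBm _)).symm
      _ = (P.map Zv) (B (Fin.last n)) := by rw [hexch σ]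
      _ = P (A (Fin.last n)) := Measure.map_apply hZvm (hBm _)
  have hpoint : ∀ ω, (k : ℝ≥0∞) ≤ ∑ j, (A j).indicator (fun _ => (1:ℝ≥0∞)) ω := by
    intro ω
    have hcast : (∑ j, (A j).indicator (fun _ => (1:ℝ≥0∞)) ω) =
        ((Finset.univ.filter fun j => ω ∈ A j).card : ℝ≥0∞) := by
      rw [Finset.card_filter, Nat.cast_sum]
      refine Finset.sum_congr rfl fun j _ => ?_
      by_cases h : ω ∈ A j <;> simp [h, Set.indicator]
    rw [hcast]
    have hfeq : (Finset.univ.filter fun j => ω ∈ A j) =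
        (Finset.univ.filter fun j =>
          (Finset.univ.filter fun i => Zv ω i < Zv ω j).card < k) := by
      ext j
      simp only [Finset.mem_filter, Finset.mem_univ, true_and]
      exact Iff.rfl
    rw [hfeq]
    exact_mod_cast Nat.cast_le.mpr (card_rank_lt (Zv ω) k (by omega))
  have hsum : ∑ j, P (A j) = ∫⁻ ω, ∑ j, (A j).indicator (fun _ => (1:ℝ≥0∞)) ω ∂P := by
    rw [lintegral_finset_sum _ fun j _ => (measurable_const.indicator (hAm j))]
    refine Finset.sum_congr rfl fun j _ => ?_
    rw [lintegral_indicator_const (hAm j) 1, one_mul]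
  have hge : (k : ℝ≥0∞) ≤ ∑ j, P (A j) := by
    rw [hsum]
    calc (k : ℝ≥0∞) = ∫⁻ _, (k : ℝ≥0∞) ∂P := by simp
      _ ≤ _ := lintegral_mono hpoint
  have hsumconst : ∑ j, P (A j) = ((n:ℝ≥0∞) + 1) * P (A (Fin.last n)) := by
    rw [Finset.sum_congr rfl fun j _ => hPA j, Finset.sum_const, Finset.card_univ]
    simp [nsmul_eq_mul]
  rw [hsumconst] at hge
  have hfinal : ENNReal.ofReal (1 - α) ≤ P (A (Fin.last n)) := by
    have h1 : ENNReal.ofReal ((1 - α) * (n + 1)) ≤ (k : ℝ≥0∞) := by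
      rw [show ((k : ℝ≥0∞)) = ENNReal.ofReal (k : ℝ) by simp]
      exact ENNReal.ofReal_le_ofReal (Nat.le_ceil _)
    have h2 : ((n:ℝ≥0∞) + 1) * ENNReal.ofReal (1 - α) ≤
        ((n:ℝ≥0∞) + 1) * P (A (Fin.last n)) := by
      refine le_trans ?_ hge
      rw [mul_comm]
      calc ENNReal.ofReal (1 - α) * ((n:ℝ≥0∞) + 1)
          = ENNReal.ofReal ((1 - α) * (n + 1)) := by
            rw [ENNReal.ofReal_mul (by linarith)]
            congr 1
            rw [ENNReal.ofReal_add (by positivity) zero_le_one]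
            simp
        _ ≤ (k : ℝ≥0∞) := h1
    exact (ENNReal.mul_le_mul_iff_right (by simp) (by simp)).mp h2
  have hset : {ω | Z (Fin.last n) ω ≤
      orderStat k (List.ofFn fun i : Fin n => Z i.castSucc ω)} = A (Fin.last n) := by
    ext ω
    simp only [Set.mem_setOf_eq, hA, hB, Set.mem_preimage, Set.mem_setOf_eq, hN, hZv]
    rw [le_orderStat_iff _ k hk1 (by simpa using hkn), countP_ofFn]
    have hcards : (Finset.univ.filter fun i : Fin n => Z i.castSucc ω < Z (Fin.last n) ω).card
        = (Finset.univ.filter fun i : Fin (n+1) => Z i ω < Z (Fin.last n) ω).card := by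
      rw [Fin.univ_castSuccEmb, Finset.filter_cons]
      simp only [lt_irrefl, if_false]
      rw [Finset.filter_map, Finset.card_map]
      rfl
    rw [hcards]
  rw [hset]
  exact hfinal

end Main
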